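/- Let t ≥ 3, s > 0, d > 0, m > 0 be integers with C(m, t−1) ≥ d, and set k = m·⌈s·d·(t−1)/m⌉ − s·d·(t−1). Then the degree sequence consisting of s copies of d, k copies of ⌊s·d·(t−1)/m⌋, and m − k copies of ⌈s·d·(t−1)/m⌉ has a simple t-uniform hypergraph realization H in which every edge contains exactly one vertex of the first group (those with prescribed degree d) and t−1 vertices of the second group. -/

import Mathlib

/-- Degree of a vertex in a hypergraph given as a finite set of edges. -/
def hdeg {V : Type*} [DecidableEq V] (H : Finset (Finset V)) (v : V) : ℕ :=
  (H.filter (fun e => v ∈ e)).card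

namespace AlmostRegular

variable {s m : ℕ}

/-- Coverage of a vertex `u` by a family `F` of subsets. -/
def cov (F : Finset (Finset (Fin m))) (u : Fin m) : ℕ := (F.filter (fun S => u ∈ S)).card

/-- Total degree of `u` over an `s`-indexed collection of families. -/
def Dg (G : Fin s → Finset (Finset (Fin m))) (u : Fin m) : ℕ := ∑ i, cov (G i) u

/-- The edge attached to left vertex `i` with right part `S`. -/
def edgeOf (i : Fin s) (S : Finset (Fin m)) : Finset (Sum (Fin s) (Fin m)) :=
  insert (Sum.inl i) (S.image Sum.inr)

lemma inl_mem_edgeOf {i j : Fin s} {S : Finset (Fin m)} :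
    Sum.inl j ∈ edgeOf i S ↔ j = i := by
  simp [edgeOf]

lemma inr_mem_edgeOf {i : Fin s} {S : Finset (Fin m)} {u : Fin m} :
    Sum.inr u ∈ edgeOf i S ↔ u ∈ S := by
  simp [edgeOf]

lemma edgeOf_inj {i j : Fin s} {S T : Finset (Fin m)} (h : edgeOf i S = edgeOf j T) :
    i = j ∧ S = T := by
  have hij : i = j := by
    have : Sum.inl i ∈ edgeOf j T := h ▸ inl_mem_edgeOf.mpr rfl
    exact inl_mem_edgeOf.mp this
  subst hij
  refine ⟨rfl, ?_⟩
  ext u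
  constructor
  · intro hu; exact inr_mem_edgeOf.mp (h ▸ inr_mem_edgeOf.mpr hu)
  · intro hu; exact inr_mem_edgeOf.mp (h ▸ inr_mem_edgeOf.mpr hu)

lemma card_edgeOf (i : Fin s) (S : Finset (Fin m)) : (edgeOf i S).card = S.card + 1 := by
  rw [edgeOf, Finset.card_insert_of_notMem (by simp),
    Finset.card_image_of_injective _ Sum.inr_injective]

lemma filter_isLeft_edgeOf (i : Fin s) (S : Finset (Fin m)) :
    (edgeOf i S).filter (fun x => x.isLeft) = {Sum.inl i} := by
  ext x
  cases x with
  | inl j => simp [edgeOf]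
  | inr u => simp [edgeOf]

lemma filter_isRight_edgeOf (i : Fin s) (S : Finset (Fin m)) :
    (edgeOf i S).filter (fun x => x.isRight) = S.image Sum.inr := by
  ext x
  cases x with
  | inl j => simp [edgeOf]
  | inr u => simp [edgeOf]

/-- The hypergraph built from the collection of families `G`. -/
def mkH (G : Fin s → Finset (Finset (Fin m))) : Finset (Finset (Sum (Fin s) (Fin m))) :=
  Finset.univ.biUnion fun i => (G i).image (edgeOf i)

lemma mem_mkH {G : Fin s → Finset (Finset (Fin m))} {e} :
    e ∈ mkH G ↔ ∃ i, ∃ S ∈ G i, edgeOf i S = e := by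
  simp [mkH]

lemma filter_inl_mkH (G : Fin s → Finset (Finset (Fin m))) (v : Fin s) :
    (mkH G).filter (fun e => Sum.inl v ∈ e) = (G v).image (edgeOf v) := by
  ext e
  simp only [Finset.mem_filter, mem_mkH, Finset.mem_image]
  constructor
  · rintro ⟨⟨i, S, hS, rfl⟩, hv⟩
    rw [inl_mem_edgeOf] at hv
    subst hv
    exact ⟨S, hS, rfl⟩
  · rintro ⟨S, hS, rfl⟩
    exact ⟨⟨v, S, hS, rfl⟩, inl_mem_edgeOf.mpr rfl⟩

lemma hdeg_mkH_inl (G : Fin s → Finset (Finset (Fin m))) (v : Fin s) :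
    hdeg (mkH G) (Sum.inl v) = (G v).card := by
  rw [hdeg, filter_inl_mkH]
  exact Finset.card_image_of_injOn fun S _ T _ h => (edgeOf_inj h).2

lemma hdeg_mkH_inr (G : Fin s → Finset (Finset (Fin m))) (u : Fin m) :
    hdeg (mkH G) (Sum.inr u) = Dg G u := by
  rw [hdeg, mkH, Finset.filter_biUnion]
  rw [Finset.card_biUnion]
  · refine Finset.sum_congr rfl fun i _ => ?_
    rw [Finset.filter_image]
    rw [Finset.card_image_of_injOn fun S _ T _ h => (edgeOf_inj h).2]
    simp only [cov, inr_mem_edgeOf]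
  · intro i _ j _ hij
    simp only [Finset.disjoint_left, Finset.mem_filter, Finset.mem_image]
    rintro e ⟨⟨S, hS, rfl⟩, -⟩ ⟨⟨T, hT, he⟩, -⟩
    exact hij ((edgeOf_inj he).1.symm)

lemma cov_split (F : Finset (Finset (Fin m))) (u v : Fin m) :
    cov F u = (F.filter (fun S => u ∈ S ∧ v ∈ S)).card
      + (F.filter (fun S => u ∈ S ∧ v ∉ S)).card := by
  rw [cov, ← Finset.filter_filter, ← Finset.filter_filter,
    Finset.card_filter_add_card_filter_not]

/-- If the degree of `u` exceeds that of `v` by at least 2, some family admits a swap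
moving one incidence from `u` to `v`. -/
lemma exists_swap (G : Fin s → Finset (Finset (Fin m))) (u v : Fin m)
    (h : Dg G v + 2 ≤ Dg G u) :
    ∃ i, ∃ X ∈ G i, u ∈ X ∧ v ∉ X ∧ insert v (X.erase u) ∉ G i := by
  have huv : u ≠ v := by rintro rfl; omega
  by_contra hc
  push_neg at hc
  have key : ∀ i : Fin s, cov (G i) u ≤ cov (G i) v := by
    intro i
    rw [cov_split (G i) u v, cov_split (G i) v u]
    have hAB : ((G i).filter (fun S => u ∈ S ∧ v ∉ S)).card
        ≤ ((G i).filter (fun S => v ∈ S ∧ u ∉ S)).card := by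
      apply Finset.card_le_card_of_injOn (fun S => insert v (S.erase u))
      · intro S hS
        simp only [Finset.mem_coe, Finset.mem_filter] at hS ⊢
        obtain ⟨hSG, hu, hv⟩ := hS
        refine ⟨hc i S hSG hu hv, Finset.mem_insert_self _ _, ?_⟩
        simp [huv]
      · intro S hS T hT hST
        simp only [Finset.coe_filter, Set.mem_setOf_eq] at hS hT
        have hrec : ∀ W : Finset (Fin m), u ∈ W → v ∉ W →
            insert u ((insert v (W.erase u)).erase v) = W := by
          intro W hu hv
          rw [Finset.erase_insert (by simp [hv]), Finset.insert_erase hu]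
        simp only at hST
        rw [← hrec S hS.2.1 hS.2.2, ← hrec T hT.2.1 hT.2.2, hST]
    have hC : ((G i).filter (fun S => u ∈ S ∧ v ∈ S)).card
        = ((G i).filter (fun S => v ∈ S ∧ u ∈ S)).card := by
      congr 1; ext S; simp [and_comm]
    omega
  have : Dg G u ≤ Dg G v := Finset.sum_le_sum fun i _ => key i
  omega

section covupdate

variable {F : Finset (Finset (Fin m))} {X : Finset (Fin m)} {u v : Fin m}

lemma cov_swap_u (hX : X ∈ F) (hu : u ∈ X) (huv : u ≠ v) :
    cov (insert (insert v (X.erase u)) (F.erase X)) u + 1 = cov F u := by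
  rw [cov, cov, Finset.filter_insert, if_neg (by simp [huv]),
    Finset.filter_erase, Finset.card_erase_add_one (Finset.mem_filter.mpr ⟨hX, hu⟩)]

lemma cov_swap_v (hX' : insert v (X.erase u) ∉ F) (hv : v ∉ X) :
    cov (insert (insert v (X.erase u)) (F.erase X)) v = cov F v + 1 := by
  rw [cov, cov, Finset.filter_insert, if_pos (Finset.mem_insert_self _ _),
    Finset.filter_erase,
    Finset.erase_eq_of_notMem (a := X) (fun h => hv (Finset.mem_filter.mp h).2),
    Finset.card_insert_of_notMem
      (fun h => hX' (Finset.mem_filter.mp h).1)]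

lemma cov_swap_other (hX : X ∈ F) (hX' : insert v (X.erase u) ∉ F)
    {w : Fin m} (hwu : w ≠ u) (hwv : w ≠ v) :
    cov (insert (insert v (X.erase u)) (F.erase X)) w = cov F w := by
  have hmem : w ∈ insert v (X.erase u) ↔ w ∈ X := by
    simp [hwv, hwu, Finset.mem_erase]
  rw [cov, cov, Finset.filter_insert, Finset.filter_erase]
  by_cases hwX : w ∈ X
  · rw [if_pos (hmem.mpr hwX),
      Finset.card_insert_of_notMem
        (fun h => hX' (Finset.mem_filter.mp (Finset.mem_of_mem_erase h)).1),
      Finset.card_erase_add_one (Finset.mem_filter.mpr ⟨hX, hwX⟩)]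
  · rw [if_neg (fun h => hwX (hmem.mp h)),
      Finset.erase_eq_of_notMem (by simp [hwX])]

end covupdate

/-- Rebalancing: any collection of families of `r`-sets can be transformed, preserving
the cardinality of each family and the sizes of the sets, into one whose total
degrees are almost regular. -/
lemma rebalance (r : ℕ) (G : Fin s → Finset (Finset (Fin m)))
    (hsize : ∀ i, ∀ S ∈ G i, S.card = r) :
    ∃ G' : Fin s → Finset (Finset (Fin m)),
      (∀ i, (G' i).card = (G i).card) ∧ (∀ i, ∀ S ∈ G' i, S.card = r) ∧
      ∀ u v : Fin m, Dg G' u ≤ Dg G' v + 1 := by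
  suffices H : ∀ n (G : Fin s → Finset (Finset (Fin m))),
      (∑ w, (Dg G w) ^ 2) < n → (∀ i, ∀ S ∈ G i, S.card = r) →
      ∃ G' : Fin s → Finset (Finset (Fin m)),
        (∀ i, (G' i).card = (G i).card) ∧ (∀ i, ∀ S ∈ G' i, S.card = r) ∧
        ∀ u v : Fin m, Dg G' u ≤ Dg G' v + 1 by
    exact H _ G (Nat.lt_succ_self _) hsize
  intro n
  induction n with
  | zero => intro G h; omega
  | succ n ih =>
    intro G hpot hsize
    by_cases hbal : ∀ u v : Fin m, Dg G u ≤ Dg G v + 1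
    · exact ⟨G, fun _ => rfl, hsize, hbal⟩
    push_neg at hbal
    obtain ⟨u, v, huv2⟩ := hbal
    have huv2 : Dg G v + 2 ≤ Dg G u := huv2
    have huv : u ≠ v := by rintro rfl; omega
    obtain ⟨i, X, hX, hu, hv, hX'⟩ := exists_swap G u v huv2
    set X' : Finset (Fin m) := insert v (X.erase u) with hX'def
    set G₁ : Fin s → Finset (Finset (Fin m)) :=
      Function.update G i (insert X' ((G i).erase X)) with hG₁
    have hGj : ∀ j, j ≠ i → G₁ j = G j := fun j hj => Function.update_of_ne hj _ _
    have hGi : G₁ i = insert X' ((G i).erase X) := Function.update_self _ _ _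
    have hDu : Dg G₁ u + 1 = Dg G u := by
      rw [Dg, Dg, ← Finset.sum_erase_add _ _ (Finset.mem_univ i),
        ← Finset.sum_erase_add _ _ (Finset.mem_univ i)]
      rw [Finset.sum_congr rfl fun j hj => by
        rw [hGj j (Finset.mem_erase.mp hj).1]]
      have hc := cov_swap_u (F := G i) hX hu huv
      rw [← hX'def] at hc
      rw [hGi]
      omega
    have hDv : Dg G₁ v = Dg G v + 1 := by
      rw [Dg, Dg, ← Finset.sum_erase_add _ _ (Finset.mem_univ i),
        ← Finset.sum_erase_add _ _ (Finset.mem_univ i)]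
      rw [Finset.sum_congr rfl fun j hj => by
        rw [hGj j (Finset.mem_erase.mp hj).1]]
      have hc := cov_swap_v (F := G i) (hX'def ▸ hX') hv
      rw [← hX'def] at hc
      rw [hGi]
      omega
    have hDw : ∀ w, w ≠ u → w ≠ v → Dg G₁ w = Dg G w := by
      intro w hwu hwv
      rw [Dg, Dg]
      refine Finset.sum_congr rfl fun j _ => ?_
      by_cases hji : j = i
      · subst hji
        rw [hGi]
        exact cov_swap_other hX hX' hwu hwv
      · rw [hGj j hji]
    have hpot1 : (∑ w, (Dg G₁ w) ^ 2) < ∑ w, (Dg G w) ^ 2 := by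
      have hvmem : v ∈ Finset.univ.erase u :=
        Finset.mem_erase.mpr ⟨Ne.symm huv, Finset.mem_univ v⟩
      rw [← Finset.sum_erase_add _ _ (Finset.mem_univ u),
        ← Finset.sum_erase_add _ _ hvmem,
        ← Finset.sum_erase_add _ _ (Finset.mem_univ u),
        ← Finset.sum_erase_add _ _ hvmem]
      have heq : ∑ w ∈ (Finset.univ.erase u).erase v, Dg G₁ w ^ 2
          = ∑ w ∈ (Finset.univ.erase u).erase v, Dg G w ^ 2 := by
        refine Finset.sum_congr rfl fun w hw => ?_
        have hw' := Finset.mem_erase.mp hw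
        have hw'' := Finset.mem_erase.mp hw'.2
        rw [hDw w hw''.1 hw'.1]
      rw [heq]
      have h1 : Dg G₁ u + 1 = Dg G u := hDu
      have h2 : Dg G₁ v = Dg G v + 1 := hDv
      nlinarith [h1, h2, huv2]
    have hcard : ∀ j, (G₁ j).card = (G j).card := by
      intro j
      by_cases hji : j = i
      · subst hji
        rw [hGi, Finset.card_insert_of_notMem (by simp [hX']),
          Finset.card_erase_of_mem hX]
        have : 0 < (G j).card := Finset.card_pos.mpr ⟨X, hX⟩
        omega
      · rw [hGj j hji]
    have hsize1 : ∀ j, ∀ S ∈ G₁ j, S.card = r := by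
      intro j S hS
      by_cases hji : j = i
      · subst hji
        rw [hGi, Finset.mem_insert] at hS
        rcases hS with rfl | hS
        · rw [hX'def, Finset.card_insert_of_notMem (by simp [hv]),
            Finset.card_erase_of_mem hu]
          have h1 : X.card = r := hsize j X hX
          have h2 : 0 < X.card := Finset.card_pos.mpr ⟨u, hu⟩
          omega
        · exact hsize j S (Finset.mem_of_mem_erase hS)
      · rw [hGj j hji] at hS; exact hsize j S hS
    obtain ⟨G', h1, h2, h3⟩ := ih G₁ (by omega) hsize1
    exact ⟨G', fun j => (h1 j).trans (hcard j), h2, h3⟩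

/-- Double counting: the sum of coverages equals the sum of set sizes. -/
lemma sum_cov (F : Finset (Finset (Fin m))) : ∑ u, cov F u = ∑ S ∈ F, S.card := by
  simp only [cov, Finset.card_filter]
  rw [Finset.sum_comm]
  refine Finset.sum_congr rfl fun S _ => ?_
  simp [Finset.sum_ite_mem]

/-- Ceiling division formula. -/
lemma ceil_div_eq (N : ℕ) (hm : 0 < m) :
    (N + m - 1) / m = N / m + (if N % m = 0 then 0 else 1) := by
  set q := N / m with hq
  set c := N % m with hc
  have hdm : m * q + c = N := Nat.div_add_mod N m
  have hcm : c < m := Nat.mod_lt _ hm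
  by_cases h0 : c = 0
  · rw [if_pos h0]
    have he : N + m - 1 = m * q + (m - 1) := by omega
    rw [he, Nat.mul_add_div hm, Nat.div_eq_of_lt (by omega)]
  · rw [if_neg h0]
    have he : N + m - 1 = m * (q + 1) + (c - 1) := by
      rw [Nat.mul_add, Nat.mul_one]; omega
    rw [he, Nat.mul_add_div hm, Nat.div_eq_of_lt (by omega), Nat.add_zero]

end AlmostRegular

open AlmostRegular in
/-- The almost-regular gadget lemma: with `k = m⌈sd(t-1)/m⌉ - sd(t-1)`, the degree
sequence consisting of `s` copies of `d`, `k` copies of `⌊sd(t-1)/m⌋` and `m - k`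
copies of `⌈sd(t-1)/m⌉` has a simple `t`-uniform realization in which each edge
contains exactly one vertex of the first group and `t-1` vertices of the second. -/
theorem almost_regular_gadget (t s d m : ℕ) (ht : 3 ≤ t)
    (hs : 0 < s) (hd : 0 < d) (hm : 0 < m)
    (hC : d ≤ m.choose (t - 1)) :
    ∃ H : Finset (Finset (Sum (Fin s) (Fin m))),
      (∀ e ∈ H, e.card = t) ∧
      (∀ e ∈ H, (e.filter (fun x => x.isLeft)).card = 1 ∧
        (e.filter (fun x => x.isRight)).card = t - 1) ∧
      (∀ v : Fin s, hdeg H (Sum.inl v) = d) ∧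
      (∃ A : Finset (Fin m),
        A.card = m * ((s * d * (t - 1) + m - 1) / m) - s * d * (t - 1) ∧
        (∀ u ∈ A, hdeg H (Sum.inr u) = s * d * (t - 1) / m) ∧
        (∀ u ∉ A, hdeg H (Sum.inr u) = (s * d * (t - 1) + m - 1) / m)) := by
  classical
  obtain ⟨F₀, hF₀sub, hF₀card⟩ := Finset.exists_subset_card_eq (show d ≤ ((Finset.univ : Finset (Fin m)).powersetCard (t - 1)).card from
      (by rw [Finset.card_powersetCard, Finset.card_univ, Fintype.card_fin]; exact hC))
  have hF₀sizes : ∀ S ∈ F₀, S.card = t - 1 := fun S hS =>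
    (Finset.mem_powersetCard.mp (hF₀sub hS)).2
  obtain ⟨G, hGcard, hGsize, hGbal⟩ := rebalance (s := s) (t - 1) (fun _ => F₀)
      (fun _ S hS => hF₀sizes S hS)
  have hGd : ∀ i, (G i).card = d := fun i => (hGcard i).trans hF₀card
  refine ⟨mkH G, ?_, ?_, ?_, ?_⟩
  · rintro e he
    obtain ⟨i, S, hS, rfl⟩ := mem_mkH.mp he
    rw [card_edgeOf, hGsize i S hS]
    omega
  · rintro e he
    obtain ⟨i, S, hS, rfl⟩ := mem_mkH.mp he
    constructor
    · rw [filter_isLeft_edgeOf]; simp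
    · rw [filter_isRight_edgeOf,
        Finset.card_image_of_injective _ Sum.inr_injective, hGsize i S hS]
  · intro v
    rw [hdeg_mkH_inl, hGd v]
  · -- the right-degree part
    set N := s * d * (t - 1) with hN
    set f : Fin m → ℕ := fun u => Dg G u with hf
    have hdegeq : ∀ u, hdeg (mkH G) (Sum.inr u) = f u := fun u => hdeg_mkH_inr G u
    have hsum : ∑ u, f u = N := by
      rw [hf]
      simp only [Dg]
      rw [Finset.sum_comm]
      have h1 : ∀ i : Fin s, (∑ u, cov (G i) u) = d * (t - 1) := by
        intro i
        rw [sum_cov]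
        rw [Finset.sum_const_nat (fun S hS => hGsize i S hS), hGd i]
      rw [Finset.sum_congr rfl fun i _ => h1 i]
      simp [hN, Finset.card_univ, Nat.mul_assoc]
    obtain ⟨u₀, -, hmin⟩ := Finset.exists_min_image Finset.univ f
      ⟨⟨0, hm⟩, Finset.mem_univ _⟩
    set b := f u₀ with hb
    have hspread : ∀ u, f u = b ∨ f u = b + 1 := by
      intro u
      have h1 := hmin u (Finset.mem_univ u)
      have h2 : f u ≤ f u₀ + 1 := hGbal u u₀
      omega
    set Hi := Finset.univ.filter (fun u => f u = b + 1) with hHi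
    set L := Finset.univ.filter (fun u => ¬(f u = b + 1)) with hL
    have hsplit : Hi.card + L.card = m := by
      rw [hHi, hL, Finset.card_filter_add_card_filter_not,
        Finset.card_univ, Fintype.card_fin]
    have hsumsplit : N = Hi.card * (b + 1) + L.card * b := by
      rw [← hsum, ← Finset.sum_filter_add_sum_filter_not Finset.univ (fun u => f u = b + 1) f]
      congr 1
      · exact Finset.sum_const_nat fun x hx => (Finset.mem_filter.mp hx).2
      · refine Finset.sum_const_nat fun x hx => ?_
        have := (Finset.mem_filter.mp hx).2
        rcases hspread x with h | h
        · exact h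
        · exact absurd h this
    by_cases hHi0 : Hi.card = 0
    · -- all degrees equal b, m ∣ N
      have hall : ∀ u, f u = b := by
        intro u
        rcases hspread u with h | h
        · exact h
        · exfalso
          have hmem : u ∈ Hi := Finset.mem_filter.mpr ⟨Finset.mem_univ u, h⟩
          have := Finset.card_pos.mpr ⟨u, hmem⟩
          omega
      have hLm : L.card = m := by omega
      have hNmb : N = m * b := by rw [hsumsplit, hHi0, hLm]; ring
      have hmod : N % m = 0 := by rw [hNmb]; exact Nat.mul_mod_right m b
      have hdiv : N / m = b := by rw [hNmb]; exact Nat.mul_div_cancel_left b hm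
      have hceil : (N + m - 1) / m = b := by
        rw [ceil_div_eq N hm, if_pos hmod, hdiv]
        omega
      refine ⟨∅, ?_, ?_, ?_⟩
      · rw [Finset.card_empty, hceil, ← hNmb, Nat.sub_self]
      · intro u hu; exact absurd hu (Finset.notMem_empty u)
      · intro u _
        rw [hdegeq u, hall u, hceil]
    · -- degrees take both values b and b+1
      have hLpos : 0 < L.card := by
        refine Finset.card_pos.mpr ⟨u₀, ?_⟩
        rw [hL, Finset.mem_filter]
        exact ⟨Finset.mem_univ u₀, by omega⟩
      have hHim : Hi.card < m := by omega
      have hNmb : N = m * b + Hi.card := by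
        rw [hsumsplit]
        have : Hi.card * (b + 1) + L.card * b = (Hi.card + L.card) * b + Hi.card := by ring
        rw [this, hsplit]
      have hmod : N % m = Hi.card := by
        rw [hNmb, Nat.mul_add_mod, Nat.mod_eq_of_lt hHim]
      have hdiv : N / m = b := by
        rw [hNmb, Nat.mul_add_div hm, Nat.div_eq_of_lt hHim, Nat.add_zero]
      have hceil : (N + m - 1) / m = b + 1 := by
        rw [ceil_div_eq N hm, if_neg (by omega), hdiv]
      refine ⟨L, ?_, ?_, ?_⟩
      · rw [hceil, Nat.mul_succ]
        omega
      · intro u hu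
        have := (Finset.mem_filter.mp hu).2
        rw [hdegeq u, hdiv]
        rcases hspread u with h | h
        · exact h
        · exact absurd h this
      · intro u hu
        have : f u = b + 1 := by
          by_contra h
          exact hu (Finset.mem_filter.mpr ⟨Finset.mem_univ u, h⟩)
        rw [hdegeq u, this, hceil]
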